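/- Let n ≥ 2 and let ψ : F(n) → ℤⁿ be the abelianization of the free group of rank n, with K = ker(ψ). Then the ℤ[ℤⁿ]-module K/[K,K] is not a projective ℤ[ℤⁿ]-module when n ≥ 3. -/

import Mathlib

/-- Conjugation by `g : G` on the kernel of `φ`. -/
def conjKer {G Γ : Type*} [Group G] [Group Γ] (φ : G →* Γ) (g : G) : φ.ker →* φ.ker where
  toFun k := ⟨g * (k : G) * g⁻¹, (MonoidHom.normal_ker φ).conj_mem _ k.2 g⟩
  map_one' := by ext; simp
  map_mul' x y := by ext; simp [mul_assoc]

/-- The induced conjugation action on the abelianization of the kernel of `φ`. -/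
def conjAb {G Γ : Type*} [Group G] [Group Γ] (φ : G →* Γ) (g : G) :
    Abelianization φ.ker →* Abelianization φ.ker :=
  Abelianization.map (conjKer φ g)

open scoped commutatorElement

/-- Free class-2 nilpotent-ish group: pairs (a, s) with twisted multiplication. -/
def HW (n : ℕ) := (Fin n → ℤ) × (Fin n → Fin n → ℤ)

namespace HW

/-- elementary tensor -/
def tens (a b : Fin n → ℤ) : Fin n → Fin n → ℤ := fun i j => a i * b j

instance : Group (HW n) where
  mul x y := (x.1 + y.1, x.2 + y.2 + tens x.1 y.1)
  one := ((0 : Fin n → ℤ), (0 : Fin n → Fin n → ℤ))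
  inv x := (-x.1, tens x.1 x.1 - x.2)
  mul_assoc x y z := by
    show (_, _) = (_, _)
    refine Prod.ext (by show x.1 + y.1 + z.1 = x.1 + (y.1 + z.1); abel) ?_
    show x.2 + y.2 + tens x.1 y.1 + z.2 + tens (x.1 + y.1) z.1
        = x.2 + (y.2 + z.2 + tens y.1 z.1) + tens x.1 (y.1 + z.1)
    funext i j; simp [tens]; ring
  one_mul x := by
    refine Prod.ext (by show 0 + x.1 = x.1; simp) ?_
    show 0 + x.2 + tens 0 x.1 = x.2
    funext i j; simp [tens]
  mul_one x := by
    refine Prod.ext (by show x.1 + 0 = x.1; simp) ?_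
    show x.2 + 0 + tens x.1 0 = x.2
    funext i j; simp [tens]
  inv_mul_cancel x := by
    refine Prod.ext (by show -x.1 + x.1 = 0; simp) ?_
    show tens x.1 x.1 - x.2 + x.2 + tens (-x.1) x.1 = 0
    funext i j; simp [tens]

lemma mul_def (x y : HW n) : x * y = (x.1 + y.1, x.2 + y.2 + tens x.1 y.1) := rfl
lemma inv_def (x : HW n) : x⁻¹ = (-x.1, tens x.1 x.1 - x.2) := rfl
lemma one_def : (1 : HW n) = ((0 : Fin n → ℤ), (0 : Fin n → Fin n → ℤ)) := rfl

/-- Elements with trivial first component are central. -/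
lemma conj_central (x y : HW n) (hy : y.1 = 0) : x * y * x⁻¹ = y := by
  refine Prod.ext ?_ ?_
  · show x.1 + y.1 + -x.1 = y.1; abel
  · show x.2 + y.2 + tens x.1 y.1 + (tens x.1 x.1 - x.2) + tens (x.1 + y.1) (-x.1) = y.2
    funext i j
    simp [tens, hy]
    ring


/-- the degree-one generators -/
def gen (a : Fin n → ℤ) : HW n := (a, 0)

lemma comm_eval (a b : Fin n → ℤ) :
    ⁅gen a, gen b⁆ = ((0 : Fin n → ℤ), tens a b - tens b a) := by
  show gen a * gen b * (gen a)⁻¹ * (gen b)⁻¹ = _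
  simp only [mul_def, inv_def, gen]
  refine Prod.ext ?_ ?_
  · show a + b + -a + -b = 0; abel
  · funext i j
    show ((0 + 0 + tens a b) + (tens a a - 0) + tens (a + b) (-a) + (tens b b - 0) + tens (a + b + -a) (-b)) i j = _
    simp [tens]; ring

/-- first projection as a monoid hom into the multiplicative ℤⁿ -/
def fstHom : HW n →* Multiplicative (Fin n → ℤ) where
  toFun x := Multiplicative.ofAdd x.1
  map_one' := rfl
  map_mul' x y := by
    show Multiplicative.ofAdd (x.1 + y.1) = _
    rfl

end HW


variable {n : ℕ} (ψ : FreeGroup (Fin n) →* Multiplicative (Fin n → ℤ))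

namespace Stmt12

/-- the map ℤⁿ →+ (abelianization of free group), vᵢ ↦ ∑ vᵢ·[xᵢ] -/
noncomputable def iota : (Fin n → ℤ) →+ Additive (Abelianization (FreeGroup (Fin n))) where
  toFun v := ∑ i, v i • Additive.ofMul (Abelianization.of (FreeGroup.of i))
  map_zero' := by simp
  map_add' v w := by
    simp [add_smul, Finset.sum_add_distrib]

lemma iota_single (i : Fin n) :
    iota (Pi.single i 1) = Additive.ofMul (Abelianization.of (FreeGroup.of i)) := by
  simp [iota, Pi.single_apply]

lemma iota_surjective : Function.Surjective (iota (n := n)) := by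
  intro x
  have key : ∀ w : FreeGroup (Fin n), ∃ v,
      iota v = Additive.ofMul (Abelianization.of w) := by
    intro w
    induction w using FreeGroup.induction_on with
    | C1 => exact ⟨0, by simp⟩
    | of i => exact ⟨Pi.single i 1, iota_single i⟩
    | inv_of i _ =>
        refine ⟨-(Pi.single i 1), ?_⟩
        rw [map_neg, iota_single]
        show _ = Additive.ofMul (Abelianization.of ((FreeGroup.of i)⁻¹))
        simp
    | mul w₁ w₂ h₁ h₂ =>
        obtain ⟨v₁, hv₁⟩ := h₁; obtain ⟨v₂, hv₂⟩ := h₂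
        exact ⟨v₁ + v₂, by rw [map_add, hv₁, hv₂]; simp⟩
  obtain ⟨w, hw⟩ : ∃ w, Abelianization.of w = Additive.toMul x :=
    QuotientGroup.mk_surjective (Additive.toMul x)
  obtain ⟨v, hv⟩ := key w
  exact ⟨v, by rw [hv, hw]; rfl⟩

/-- ψ as a hom out of the abelianization, additively -/
noncomputable def abv : Additive (Abelianization (FreeGroup (Fin n))) →+ (Fin n → ℤ) :=
  MonoidHom.toAdditiveLeft (Abelianization.lift ψ)

/-- the composite endomorphism of ℤⁿ -/
noncomputable def tau : (Fin n → ℤ) →+ (Fin n → ℤ) := (abv ψ).comp iota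

lemma tau_surjective (hψ : Function.Surjective ψ) : Function.Surjective (tau ψ) := by
  intro γ
  obtain ⟨h, rfl⟩ := hψ (Multiplicative.ofAdd γ)
  obtain ⟨v, hv⟩ := iota_surjective (Additive.ofMul (Abelianization.of h))
  refine ⟨v, ?_⟩
  simp only [tau, AddMonoidHom.comp_apply, hv, abv]
  simp [MonoidHom.toAdditiveLeft]
  rfl

lemma tau_injective (hψ : Function.Surjective ψ) : Function.Injective (tau ψ) := by
  have := IsNoetherian.injective_of_surjective_endomorphism
    (tau ψ).toIntLinearMap (tau_surjective ψ hψ)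
  exact this

lemma abv_injective (hψ : Function.Surjective ψ) : Function.Injective (abv (n := n) ψ) := by
  intro x y hxy
  obtain ⟨v, rfl⟩ := iota_surjective x
  obtain ⟨w, rfl⟩ := iota_surjective y
  rw [show (abv ψ) (iota v) = tau ψ v from rfl, show (abv ψ) (iota w) = tau ψ w from rfl] at hxy
  have := tau_injective ψ hψ hxy
  rw [this]

/-- any element of ker ψ dies in the abelianization of the free group -/
lemma of_eq_one_of_ker (hψ : Function.Surjective ψ) {k : FreeGroup (Fin n)} (hk : ψ k = 1) :
    Abelianization.of k = 1 := by
  have h1 : abv ψ (Additive.ofMul (Abelianization.of k)) = abv ψ (Additive.ofMul 1) := by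
    simp only [abv, MonoidHom.toAdditiveLeft]
    simp [hk]
  have := abv_injective ψ hψ h1
  exact Additive.ofMul.injective this

/-- hence any hom from the free group to a commutative group kills ker ψ -/
lemma hom_eq_one_of_ker (hψ : Function.Surjective ψ) {H : Type*} [CommGroup H] (χ : FreeGroup (Fin n) →* H)
    {k : FreeGroup (Fin n)} (hk : ψ k = 1) : χ k = 1 := by
  have : χ k = (Abelianization.lift χ) (Abelianization.of k) := rfl
  rw [this, of_eq_one_of_ker ψ hψ hk, map_one]

end Stmt12

namespace Stmt12

variable {G Γ : Type*} [Group G] [CommGroup Γ] (ψ : G →* Γ)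

lemma comm_mem (u v : G) : ⁅u, v⁆ ∈ ψ.ker := by
  rw [MonoidHom.mem_ker, map_commutatorElement, commutatorElement_eq_one_iff_commute]
  exact mul_comm _ _

/-- class of the commutator ⁅u,v⁆ in the abelianized kernel -/
def q (u v : G) : Abelianization ψ.ker := Abelianization.of ⟨⁅u, v⁆, comm_mem ψ u v⟩

lemma conjAb_of (h : G) (k : ψ.ker) :
    conjAb ψ h (Abelianization.of k) = Abelianization.of (conjKer ψ h k) :=
  Abelianization.map_of _ _

lemma conj_mul (h₁ h₂ : G) (x : Abelianization ψ.ker) :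
    conjAb ψ (h₁ * h₂) x = conjAb ψ h₁ (conjAb ψ h₂ x) := by
  have : conjAb ψ (h₁ * h₂) = (conjAb ψ h₁).comp (conjAb ψ h₂) := by
    apply Abelianization.hom_ext
    ext k
    show conjAb ψ (h₁ * h₂) (Abelianization.of k) = conjAb ψ h₁ (conjAb ψ h₂ (Abelianization.of k))
    rw [conjAb_of, conjAb_of, conjAb_of]
    congr 1
    ext
    show (h₁ * h₂) * (k : G) * (h₁ * h₂)⁻¹ = h₁ * (h₂ * (k : G) * h₂⁻¹) * h₁⁻¹
    group
  rw [this]; rfl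

lemma conj_ker_triv {k : G} (hk : k ∈ ψ.ker) (x : Abelianization ψ.ker) :
    conjAb ψ k x = x := by
  have : conjAb ψ k = MonoidHom.id _ := by
    apply Abelianization.hom_ext
    ext κ
    show conjAb ψ k (Abelianization.of κ) = Abelianization.of κ
    rw [conjAb_of]
    have hcomm : conjKer ψ k κ = (⟨k, hk⟩ : ψ.ker) * κ * (⟨k, hk⟩ : ψ.ker)⁻¹ := rfl
    rw [hcomm, map_mul, map_mul, map_inv, mul_comm (Abelianization.of ⟨k, hk⟩) (Abelianization.of κ),
      mul_assoc, mul_inv_cancel, mul_one]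
  rw [this]; rfl

lemma conj_inv_cancel (h : G) (x : Abelianization ψ.ker) :
    conjAb ψ h (conjAb ψ h⁻¹ x) = x := by
  rw [← conj_mul, mul_inv_cancel]
  exact conj_ker_triv ψ (map_one ψ) x

/-- expansion rule (A) -/
lemma qA (u v w : G) : q ψ u (v * w) = q ψ u v * conjAb ψ v (q ψ u w) := by
  rw [q, q, q, conjAb_of, ← map_mul]
  congr 1
  ext
  show ⁅u, v * w⁆ = ⁅u, v⁆ * (v * ⁅u, w⁆ * v⁻¹)
  group

/-- inversion rule (B) -/
lemma qB (u v : G) : q ψ u v⁻¹ = conjAb ψ v⁻¹ ((q ψ u v)⁻¹) := by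
  rw [q, q, ← map_inv, conjAb_of]
  congr 1
  ext
  simp only [conjKer, MonoidHom.coe_mk, OneHom.coe_mk]
  push_cast
  group

/-- left side: q a ⁅b,c⁆ is the "derivation" of the action of a on [b,c] -/
lemma qL (a b c : G) :
    q ψ a ⁅b, c⁆ = conjAb ψ a (q ψ b c) * (q ψ b c)⁻¹ := by
  rw [q, q, conjAb_of, ← map_inv, ← map_mul]
  congr 1

/-- THE key identity: the Jacobi-type relation in the abelianized kernel. -/
lemma key_identity (a b c : G) :
    conjAb ψ a (q ψ b c) * (q ψ b c)⁻¹ =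
      q ψ a b * conjAb ψ b (q ψ a c) * (conjAb ψ c (q ψ a b))⁻¹ * (q ψ a c)⁻¹ := by
  rw [← qL]
  have hbc : ⁅b, c⁆ = b * (c * (b⁻¹ * c⁻¹)) := by group
  rw [hbc, qA, qA, qA, qB, qB]
  -- now simplify the nested conjugations
  simp only [map_mul, map_inv]
  -- T_b T_c T_{b⁻¹} y = T_c y ; T_b T_c T_{b⁻¹} T_{c⁻¹} z = z
  have h1 : ∀ y : Abelianization ψ.ker,
      conjAb ψ b (conjAb ψ c (conjAb ψ b⁻¹ y)) = conjAb ψ c y := by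
    intro y
    rw [← conj_mul, ← conj_mul]
    have : b * c * b⁻¹ = ⁅b, c⁆ * c := by group
    rw [this, conj_mul, conj_ker_triv ψ (comm_mem ψ b c)]
  have h2 : ∀ z : Abelianization ψ.ker,
      conjAb ψ b (conjAb ψ c (conjAb ψ b⁻¹ (conjAb ψ c⁻¹ z))) = z := by
    intro z
    rw [← conj_mul, ← conj_mul, ← conj_mul]
    have : b * c * b⁻¹ * c⁻¹ = ⁅b, c⁆ := by group
    rw [this, conj_ker_triv ψ (comm_mem ψ b c)]
  rw [h1, h2]
  simp [mul_assoc]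

end Stmt12


namespace Stmt12

variable {n : ℕ} (ψ : FreeGroup (Fin n) →* Multiplicative (Fin n → ℤ))

/-- the homomorphism to the free class-2 nilpotent group -/
noncomputable def theta : FreeGroup (Fin n) →* HW n :=
  FreeGroup.lift (fun i => HW.gen (Pi.single i 1))

lemma theta_fst (hψ : Function.Surjective ψ) {k : FreeGroup (Fin n)} (hk : k ∈ ψ.ker) : (theta k).1 = 0 := by
  have h := hom_eq_one_of_ker ψ hψ (HW.fstHom.comp (theta (n := n)))
    (MonoidHom.mem_ker.mp hk)
  have : Multiplicative.ofAdd (theta k).1 = Multiplicative.ofAdd (0 : Fin n → ℤ) := h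
  exact Multiplicative.ofAdd.injective this

/-- the ℤ-valued weight on the kernel: (1,2)-entry of the second component of θ -/
noncomputable def wHom (hψ : Function.Surjective ψ) (i j : Fin n) : ψ.ker →* Multiplicative ℤ where
  toFun k := Multiplicative.ofAdd ((theta (k : FreeGroup (Fin n))).2 i j)
  map_one' := by
    show Multiplicative.ofAdd ((theta (1 : FreeGroup (Fin n))).2 i j) = 1
    rw [map_one]
    rfl
  map_mul' k k' := by
    show Multiplicative.ofAdd ((theta ((k : FreeGroup (Fin n)) * (k' : FreeGroup (Fin n)))).2 i j) = _
    rw [map_mul]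
    have h1 : (theta (k : FreeGroup (Fin n))).1 = 0 := theta_fst ψ hψ k.2
    show Multiplicative.ofAdd
      (((theta (k:FreeGroup (Fin n))).2 + (theta (k':FreeGroup (Fin n))).2
        + HW.tens (theta (k:FreeGroup (Fin n))).1 (theta (k':FreeGroup (Fin n))).1) i j) = _
    rw [h1]
    show Multiplicative.ofAdd
      ((theta (k:FreeGroup (Fin n))).2 i j + (theta (k':FreeGroup (Fin n))).2 i j
        + (0 * (theta (k':FreeGroup (Fin n))).1 j)) = _
    rw [zero_mul, add_zero]
    rfl

/-- the invariant functional on the abelianized kernel -/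
noncomputable def Phi (hψ : Function.Surjective ψ) (i j : Fin n) : Abelianization ψ.ker →* Multiplicative ℤ :=
  Abelianization.lift (wHom ψ hψ i j)

lemma Phi_conj (hψ : Function.Surjective ψ) (i j : Fin n) (h : FreeGroup (Fin n)) (x : Abelianization ψ.ker) :
    Phi ψ hψ i j (conjAb ψ h x) = Phi ψ hψ i j x := by
  have : (Phi ψ hψ i j).comp (conjAb ψ h) = Phi ψ hψ i j := by
    apply Abelianization.hom_ext
    ext k
    show Phi ψ hψ i j (conjAb ψ h (Abelianization.of k)) = Phi ψ hψ i j (Abelianization.of k)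
    rw [conjAb_of]
    show wHom ψ hψ i j (conjKer ψ h k) = wHom ψ hψ i j k
    have hθ : theta ((conjKer ψ h k : ψ.ker) : FreeGroup (Fin n)) = theta (k : FreeGroup (Fin n)) := by
      show theta (h * (k : FreeGroup (Fin n)) * h⁻¹) = _
      rw [map_mul, map_mul, map_inv]
      exact HW.conj_central _ _ (theta_fst ψ hψ k.2)
    show Multiplicative.ofAdd ((theta ((conjKer ψ h k : ψ.ker) : FreeGroup (Fin n))).2 i j) = _
    rw [hθ]
    rfl
  calc Phi ψ hψ i j (conjAb ψ h x) = ((Phi ψ hψ i j).comp (conjAb ψ h)) x := rfl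
    _ = Phi ψ hψ i j x := by rw [this]

/-- value of the functional on the basic commutator class -/
lemma Phi_value (hψ : Function.Surjective ψ) (i j : Fin n) (hij : i ≠ j) :
    Phi ψ hψ i j (q ψ (FreeGroup.of i) (FreeGroup.of j)) = Multiplicative.ofAdd (1 : ℤ) := by
  show wHom ψ hψ i j (⟨⁅FreeGroup.of i, FreeGroup.of j⁆, _⟩ : ψ.ker) = _
  show Multiplicative.ofAdd ((theta (⁅FreeGroup.of i, FreeGroup.of j⁆ : FreeGroup (Fin n))).2 i j) = _
  rw [map_commutatorElement]
  have h1 : theta (FreeGroup.of i) = HW.gen (Pi.single i 1) := FreeGroup.lift_apply_of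
  have h2 : theta (FreeGroup.of j) = HW.gen (Pi.single j 1) := FreeGroup.lift_apply_of
  rw [h1, h2, HW.comm_eval]
  congr 1
  show (HW.tens (Pi.single i 1) (Pi.single j 1) - HW.tens (Pi.single j 1) (Pi.single i 1)) i j = 1
  simp [HW.tens, Pi.single_apply, hij, Ne.symm hij]

end Stmt12

namespace Stmt12

variable {n : ℕ} (ψ : FreeGroup (Fin n) →* Multiplicative (Fin n → ℤ))

/-- τ as an additive equivalence -/
noncomputable def tauEquiv (hψ : Function.Surjective ψ) : (Fin n → ℤ) ≃+ (Fin n → ℤ) :=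
  AddEquiv.ofBijective (tau ψ) ⟨tau_injective ψ hψ, tau_surjective ψ hψ⟩

/-- the dual functional adapted to the images of the generators -/
noncomputable def qfun (hψ : Function.Surjective ψ) (i0 : Fin n) : (Fin n → ℤ) →+ ℤ :=
  (Pi.evalAddMonoidHom (fun _ : Fin n => ℤ) i0).comp (tauEquiv ψ hψ).symm.toAddMonoidHom

lemma tau_single (i : Fin n) :
    tau ψ (Pi.single i 1) = Multiplicative.toAdd (ψ (FreeGroup.of i)) := by
  show abv ψ (iota (Pi.single i 1)) = _
  rw [iota_single]
  show Multiplicative.toAdd ((Abelianization.lift ψ) (Abelianization.of (FreeGroup.of i))) = _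
  rw [Abelianization.lift_apply_of]

lemma qfun_psi (hψ : Function.Surjective ψ) (i0 j : Fin n) :
    qfun ψ hψ i0 (Multiplicative.toAdd (ψ (FreeGroup.of j))) = (Pi.single j (1:ℤ) : Fin n → ℤ) i0 := by
  rw [← tau_single]
  show ((tauEquiv ψ hψ).symm ((tauEquiv ψ hψ) (Pi.single j 1))) i0 = _
  rw [AddEquiv.symm_apply_apply]

/-- the character Γ → Multiplicative ℤ -/
noncomputable def qchar (hψ : Function.Surjective ψ) (i0 : Fin n) :
    Multiplicative (Fin n → ℤ) →* Multiplicative ℤ :=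
  AddMonoidHom.toMultiplicative (qfun ψ hψ i0)

lemma qchar_psi (hψ : Function.Surjective ψ) (i0 j : Fin n) :
    qchar ψ hψ i0 (ψ (FreeGroup.of j)) = Multiplicative.ofAdd ((Pi.single j (1:ℤ) : Fin n → ℤ) i0) := by
  show Multiplicative.ofAdd (qfun ψ hψ i0 (Multiplicative.toAdd (ψ (FreeGroup.of j)))) = _
  rw [qfun_psi]

/-- the ring homomorphism ℤ[ℤⁿ] → ℤ[ℤ] induced by the character -/
noncomputable def Pmap (hψ : Function.Surjective ψ) (i0 : Fin n) :
    MonoidAlgebra ℤ (Multiplicative (Fin n → ℤ)) →+* MonoidAlgebra ℤ (Multiplicative ℤ) :=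
  MonoidAlgebra.mapDomainRingHom ℤ (qchar ψ hψ i0)

lemma Pmap_single (hψ : Function.Surjective ψ) (i0 : Fin n)
    (γ : Multiplicative (Fin n → ℤ)) (z : ℤ) :
    Pmap ψ hψ i0 (MonoidAlgebra.single γ z) = MonoidAlgebra.single (qchar ψ hψ i0 γ) z := by
  show MonoidAlgebra.mapDomain _ _ = _
  rw [MonoidAlgebra.mapDomain_single]

lemma Pmap_of (hψ : Function.Surjective ψ) (i0 : Fin n) (γ : Multiplicative (Fin n → ℤ)) :
    Pmap ψ hψ i0 (MonoidAlgebra.of ℤ _ γ) = MonoidAlgebra.of ℤ _ (qchar ψ hψ i0 γ) :=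
  Pmap_single ψ hψ i0 γ 1

/-- T - 1 is not a zero divisor obstruction: it is nonzero in the Laurent ring -/
lemma Tsub_ne : (MonoidAlgebra.of ℤ (Multiplicative ℤ) (Multiplicative.ofAdd 1) - 1) ≠ 0 := by
  intro h
  have : ((MonoidAlgebra.of ℤ (Multiplicative ℤ)) (Multiplicative.ofAdd 1) - 1).coeff
      (Multiplicative.ofAdd (1:ℤ)) = (0 : MonoidAlgebra ℤ (Multiplicative ℤ)).coeff (Multiplicative.ofAdd 1) := by
    rw [h]
  rw [MonoidAlgebra.coeff_sub, Finsupp.sub_apply] at this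
  rw [show ((MonoidAlgebra.of ℤ (Multiplicative ℤ)) (Multiplicative.ofAdd 1)).coeff = Finsupp.single (Multiplicative.ofAdd (1:ℤ)) (1:ℤ) from rfl] at this
  rw [show (1 : MonoidAlgebra ℤ (Multiplicative ℤ)).coeff = Finsupp.single (1 : Multiplicative ℤ) (1:ℤ) from rfl] at this
  rw [Finsupp.single_apply, Finsupp.single_apply] at this
  have hne : (1 : Multiplicative ℤ) ≠ Multiplicative.ofAdd 1 := by decide
  simp [hne] at this

/-- augmentation of the Laurent ring -/
noncomputable def epsL : MonoidAlgebra ℤ (Multiplicative ℤ) →+* ℤ :=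
  (MonoidAlgebra.lift ℤ ℤ (Multiplicative ℤ) 1).toRingHom

lemma epsL_single (γ : Multiplicative ℤ) (z : ℤ) :
    epsL (MonoidAlgebra.single γ z) = z := by
  show (MonoidAlgebra.lift ℤ ℤ (Multiplicative ℤ) 1) (MonoidAlgebra.single γ z) = z
  rw [MonoidAlgebra.lift_single]
  simp

end Stmt12


/-- A `ℤ[ℤⁿ]`-module structure on `K/[K,K]` (where `K = ker ψ`) is the conjugation module
structure if the group element `ψ h` acts by conjugation by `h`. -/
def IsConjModuleStructure (n : ℕ) (ψ : FreeGroup (Fin n) →* Multiplicative (Fin n → ℤ))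
    (inst : Module (MonoidAlgebra ℤ (Multiplicative (Fin n → ℤ)))
      (Additive (Abelianization ψ.ker))) : Prop :=
  letI := inst
  ∀ (h : FreeGroup (Fin n)) (x : Abelianization ψ.ker),
    (MonoidAlgebra.of ℤ (Multiplicative (Fin n → ℤ)) (ψ h)) • (Additive.ofMul x) =
      Additive.ofMul (conjAb ψ h x)

/-- The statement that `K/[K,K]` with a given module structure is projective over `ℤ[ℤⁿ]`. -/
def ConjModuleProjective (n : ℕ) (ψ : FreeGroup (Fin n) →* Multiplicative (Fin n → ℤ))
    (inst : Module (MonoidAlgebra ℤ (Multiplicative (Fin n → ℤ)))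
      (Additive (Abelianization ψ.ker))) : Prop :=
  letI := inst
  Module.Projective (MonoidAlgebra ℤ (Multiplicative (Fin n → ℤ)))
    (Additive (Abelianization ψ.ker))

open Stmt12 in
/-- For `n ≥ 3` and `ψ : F(n) → ℤⁿ` the abelianization (any surjection), the conjugation
`ℤ[ℤⁿ]`-module `K/[K,K]` (with `K = ker ψ`) is not projective. -/
theorem stmt12 (n : ℕ) (hn : 3 ≤ n)
    (ψ : FreeGroup (Fin n) →* Multiplicative (Fin n → ℤ)) (hψ : Function.Surjective ψ) :
    ∀ inst, IsConjModuleStructure n ψ inst → ¬ ConjModuleProjective n ψ inst := by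
  intro inst hc hp
  letI := inst
  have hcc : ∀ (h : FreeGroup (Fin n)) (x : Abelianization ψ.ker),
      (MonoidAlgebra.of ℤ (Multiplicative (Fin n → ℤ)) (ψ h)) • (Additive.ofMul x) =
        Additive.ofMul (conjAb ψ h x) := hc
  have hproj : Module.Projective (MonoidAlgebra ℤ (Multiplicative (Fin n → ℤ)))
      (Additive (Abelianization ψ.ker)) := hp
  obtain ⟨s, hs⟩ := Module.projective_def.mp hproj
  -- the three indices and generators
  have h0 : (0:ℕ) < n := by omega
  have h1 : (1:ℕ) < n := by omega
  have h2 : (2:ℕ) < n := by omega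
  set i0 : Fin n := ⟨0, h0⟩ with hi0
  set i1 : Fin n := ⟨1, h1⟩ with hi1
  set i2 : Fin n := ⟨2, h2⟩ with hi2
  set a : FreeGroup (Fin n) := FreeGroup.of i0 with ha
  set b : FreeGroup (Fin n) := FreeGroup.of i1 with hb
  set c : FreeGroup (Fin n) := FreeGroup.of i2 with hc2
  -- shorthand for group-element scalars
  set g : FreeGroup (Fin n) → MonoidAlgebra ℤ (Multiplicative (Fin n → ℤ)) :=
    fun h => MonoidAlgebra.of ℤ (Multiplicative (Fin n → ℤ)) (ψ h) with hg
  -- the three module elements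
  set m1 : Additive (Abelianization ψ.ker) := Additive.ofMul (q ψ b c) with hm1
  set m2 : Additive (Abelianization ψ.ker) := Additive.ofMul (q ψ a b) with hm2
  set m3 : Additive (Abelianization ψ.ker) := Additive.ofMul (q ψ a c) with hm3
  -- the Jacobi-type relation, in module form
  have E0 : g a • m1 - m1 = m2 + g b • m3 - g c • m2 - m3 := by
    have h := congrArg Additive.ofMul (key_identity ψ a b c)
    simp only [ofMul_mul, ofMul_inv] at h
    rw [← hcc a (q ψ b c), ← hcc b (q ψ a c), ← hcc c (q ψ a b)] at h
    rw [hm1, hm2, hm3]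
    rw [sub_eq_add_neg, h]
    abel
  -- apply the splitting s
  have E1 : g a • s m1 - s m1 = s m2 + g b • s m3 - g c • s m2 - s m3 := by
    have := congrArg s E0
    rw [map_sub, map_sub, map_sub, map_add, map_smul, map_smul, map_smul] at this
    exact this
  -- coordinatewise, after applying the ring hom Pmap, the coefficient dies
  have key0 : ∀ v : Additive (Abelianization ψ.ker),
      Pmap ψ hψ i0 (s m1 v) = 0 := by
    intro v
    have hv := congrArg (fun F : (Additive (Abelianization ψ.ker)) →₀
        (MonoidAlgebra ℤ (Multiplicative (Fin n → ℤ))) => F v) E1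
    simp only [Finsupp.sub_apply, Finsupp.add_apply, Finsupp.smul_apply, smul_eq_mul] at hv
    have hP := congrArg (Pmap ψ hψ i0) hv
    simp only [map_sub, map_add, map_mul] at hP
    rw [hg] at hP
    simp only [Pmap_of] at hP
    rw [ha, hb, hc2, qchar_psi, qchar_psi, qchar_psi] at hP
    have e1 : (Pi.single i1 (1:ℤ) : Fin n → ℤ) i0 = 0 := by
      apply Pi.single_eq_of_ne
      simp [hi0, hi1, Fin.ext_iff]
    have e2 : (Pi.single i2 (1:ℤ) : Fin n → ℤ) i0 = 0 := by
      apply Pi.single_eq_of_ne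
      simp [hi0, hi2, Fin.ext_iff]
    have e0 : (Pi.single i0 (1:ℤ) : Fin n → ℤ) i0 = 1 := Pi.single_eq_same _ _
    rw [e0, e1, e2] at hP
    have hone : MonoidAlgebra.of ℤ (Multiplicative ℤ) (Multiplicative.ofAdd (0:ℤ)) = 1 := by
      rw [show Multiplicative.ofAdd (0:ℤ) = (1 : Multiplicative ℤ) from rfl, map_one]
    rw [hone] at hP
    have hfac : (MonoidAlgebra.of ℤ (Multiplicative ℤ) (Multiplicative.ofAdd (1:ℤ)) - 1) *
        Pmap ψ hψ i0 (s m1 v) = 0 := by linear_combination hP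
    rcases mul_eq_zero.mp hfac with h' | h'
    · exact absurd h' Tsub_ne
    · exact h'
  -- the invariant functional
  set Φ : Additive (Abelianization ψ.ker) →+ ℤ :=
    MonoidHom.toAdditiveLeft (Phi ψ hψ i1 i2) with hPhi
  -- semilinearity of Φ
  have semil : ∀ (r : MonoidAlgebra ℤ (Multiplicative (Fin n → ℤ)))
      (m : Additive (Abelianization ψ.ker)),
      Φ (r • m) = epsL (Pmap ψ hψ i0 r) * Φ m := by
    intro r m
    induction r using MonoidAlgebra.induction_linear with
    | zero => simp [zero_smul]
    | add f g hf hg =>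
        rw [add_smul, map_add, hf, hg, map_add, map_add, add_mul]
    | single γ z =>
        have hz : (MonoidAlgebra.single γ z : MonoidAlgebra ℤ (Multiplicative (Fin n → ℤ)))
            = z • MonoidAlgebra.of ℤ (Multiplicative (Fin n → ℤ)) γ := by
          rw [MonoidAlgebra.of_apply, MonoidAlgebra.smul_single', mul_one]
        rw [hz, smul_assoc, map_zsmul]
        obtain ⟨h, rfl⟩ := hψ γ
        have : (MonoidAlgebra.of ℤ (Multiplicative (Fin n → ℤ)) (ψ h)) • m
            = Additive.ofMul (conjAb ψ h (Additive.toMul m)) := hcc h (Additive.toMul m)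
        rw [this]
        have hval : Φ (Additive.ofMul (conjAb ψ h (Additive.toMul m))) = Φ m := by
          show Multiplicative.toAdd ((Phi ψ hψ i1 i2) (conjAb ψ h (Additive.toMul m))) = _
          rw [Phi_conj]
          rfl
        rw [hval]
        have hz2 : epsL (Pmap ψ hψ i0 (z • MonoidAlgebra.of ℤ (Multiplicative (Fin n → ℤ)) (ψ h))) = z := by
          rw [← hz, Pmap_single, epsL_single]
        rw [← hz] at hz2 ⊢
        rw [hz2]
        simp [smul_eq_mul]
  -- compute Φ m1 two ways
  have hΦm1 : Φ m1 = 1 := by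
    rw [hm1, hb, hc2]
    show Multiplicative.toAdd ((Phi ψ hψ i1 i2) (q ψ (FreeGroup.of i1) (FreeGroup.of i2))) = 1
    rw [Phi_value ψ hψ i1 i2 (by simp [hi1, hi2, Fin.ext_iff])]
    rfl
  have hΦm1' : Φ m1 = 0 := by
    conv_lhs => rw [← hs m1]
    rw [Finsupp.linearCombination_apply]
    rw [map_finsuppSum]
    rw [Finsupp.sum]
    apply Finset.sum_eq_zero
    intro v hv
    show Φ ((s m1) v • (id v : Additive (Abelianization ψ.ker))) = 0
    rw [semil, key0 v, map_zero, zero_mul]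
  rw [hΦm1] at hΦm1'
  exact one_ne_zero hΦm1'
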